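/- Let r ≥ 2 and let Π be an r-partition of {1,...,n} that is unbalanced, i.e., some part has fewer than n/(2r) elements. Then the complete multipartite graph K_Π with colour classes the parts of Π satisfies e(K_Π) ≤ ex(n, K_{r+1}) − n²/(16r²) + n. -/

import Mathlib

open Finset SimpleGraph

/-- The complete multipartite graph determined by an `r`-partition of the
vertex set, given as a colouring function. -/
def partGraph {n r : ℕ} (p : Fin n → Fin r) : SimpleGraph (Fin n) where
  Adj u v := p u ≠ p v
  symm := ⟨fun _ _ h e => h e.symm⟩
  loopless := ⟨fun _ h => h rfl⟩

instance {n r : ℕ} {p : Fin n → Fin r} : DecidableRel (partGraph p).Adj :=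
  fun u v => inferInstanceAs (Decidable (p u ≠ p v))

lemma partGraph_degree {n r : ℕ} (p : Fin n → Fin r) (v : Fin n) :
    (partGraph p).degree v + #(univ.filter fun u => p u = p v) = n := by
  rw [← card_neighborFinset_eq_degree]
  have h : (partGraph p).neighborFinset v = univ.filter fun u => ¬ p u = p v := by
    ext u
    rw [mem_neighborFinset]
    simp [partGraph, ne_comm]
  rw [h, add_comm, card_filter_add_card_filter_not]
  simp

lemma partGraph_sum_sq {n r : ℕ} (p : Fin n → Fin r) :
    2 * #(partGraph p).edgeFinset + ∑ i, (#(univ.filter fun v => p v = i)) ^ 2 = n ^ 2 := by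
  have hdeg := SimpleGraph.sum_degrees_eq_twice_card_edges (partGraph p)
  have h1 : ∑ v : Fin n, ((partGraph p).degree v + #(univ.filter fun u => p u = p v)) = n * n := by
    simp [partGraph_degree p, Finset.card_univ]
  rw [Finset.sum_add_distrib, hdeg] at h1
  have h2 : ∑ v : Fin n, #(univ.filter fun u => p u = p v)
      = ∑ i : Fin r, (#(univ.filter fun v => p v = i)) ^ 2 := by
    rw [← Finset.sum_fiberwise univ p (fun v => #(univ.filter fun u => p u = p v))]
    refine Finset.sum_congr rfl fun i _ => ?_
    have hc : ∀ v ∈ univ.filter (fun v => p v = i),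
        #(univ.filter fun u => p u = p v) = #(univ.filter fun v => p v = i) := by
      intro v hv
      simp only [mem_filter] at hv
      rw [hv.2]
    rw [Finset.sum_congr rfl hc, Finset.sum_const, smul_eq_mul, sq]
  rw [h2] at h1
  rw [h1, sq]

lemma turan_eq_partGraph {n r : ℕ} (hr0 : 0 < r) :
    turanGraph n r = partGraph (fun v : Fin n => (⟨v % r, Nat.mod_lt _ hr0⟩ : Fin r)) := by
  ext u v
  simp [turanGraph, partGraph, Fin.ext_iff]

set_option maxHeartbeats 1000000 in
theorem stmt_9 (n r : ℕ) (hr : 2 ≤ r) (p : Fin n → Fin r)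
    (hunbal : ∃ i : Fin r, ({v : Fin n | p v = i}.ncard : ℝ) < (n : ℝ) / (2 * r)) :
    ((partGraph p).edgeSet.ncard : ℝ)
      ≤ ((SimpleGraph.turanGraph n r).edgeSet.ncard : ℝ)
          - (n : ℝ) ^ 2 / (16 * (r : ℝ) ^ 2) + n := by
  classical
  obtain ⟨i0, hi0⟩ := hunbal
  have hr0 : 0 < r := by omega
  set q : Fin n → Fin r := fun v => (⟨v % r, Nat.mod_lt _ hr0⟩ : Fin r) with hq
  set a : Fin r → ℕ := fun i => #(univ.filter fun v => p v = i) with ha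
  set b : Fin r → ℕ := fun i => #(univ.filter fun v => q v = i) with hb
  have hEp : 2 * #(partGraph p).edgeFinset + ∑ i, (a i) ^ 2 = n ^ 2 := partGraph_sum_sq p
  have hEt : 2 * #(partGraph q).edgeFinset + ∑ i, (b i) ^ 2 = n ^ 2 := partGraph_sum_sq q
  have hcp : (partGraph p).edgeSet.ncard = #(partGraph p).edgeFinset := by
    rw [← SimpleGraph.coe_edgeFinset, Set.ncard_coe_finset]
  have hct : (turanGraph n r).edgeSet.ncard = #(partGraph q).edgeFinset := by
    rw [turan_eq_partGraph hr0, ← SimpleGraph.coe_edgeFinset, Set.ncard_coe_finset]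
  -- sum of class sizes
  have hasum : ∑ i, a i = n := by
    have h := Finset.card_eq_sum_card_fiberwise (s := (univ : Finset (Fin n)))
      (t := (univ : Finset (Fin r))) (f := p) (fun v _ => Finset.mem_univ (p v))
    simpa [ha] using h.symm
  have hbsum : ∑ i, b i = n := by
    have h := Finset.card_eq_sum_card_fiberwise (s := (univ : Finset (Fin n)))
      (t := (univ : Finset (Fin r))) (f := q) (fun v _ => Finset.mem_univ (q v))
    simpa [hb] using h.symm
  -- each Turán class has size ≤ n/r + 1
  have hbb : ∀ i : Fin r, b i ≤ n / r + 1 := by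
    intro i
    have hinj : Set.InjOn (fun v : Fin n => (v : ℕ) / r)
        ↑(univ.filter fun v => q v = i) := by
      intro v hv w hw hvw
      simp only [Finset.coe_filter, Set.mem_setOf_eq, hq] at hv hw
      have hv2 : (v : ℕ) % r = (i : ℕ) := congrArg Fin.val hv.2
      have hw2 : (w : ℕ) % r = (i : ℕ) := congrArg Fin.val hw.2
      have hvw' : (v : ℕ) / r = (w : ℕ) / r := hvw
      have : (v : ℕ) = (w : ℕ) := by
        calc (v : ℕ) = r * ((v : ℕ) / r) + (v : ℕ) % r := (Nat.div_add_mod _ _).symm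
        _ = r * ((w : ℕ) / r) + (w : ℕ) % r := by rw [hvw', hv2, hw2]
        _ = (w : ℕ) := Nat.div_add_mod _ _
      exact Fin.ext this
    have hmaps : ∀ v ∈ univ.filter fun v : Fin n => q v = i,
        (fun v : Fin n => (v : ℕ) / r) v ∈ Finset.range (n / r + 1) := by
      intro v _
      exact Finset.mem_range.2 (Nat.lt_succ_of_le (Nat.div_le_div_right v.2.le))
    simpa [hb] using Finset.card_le_card_of_injOn _ hmaps hinj
  -- real versions
  have hr0' : (0 : ℝ) ≤ (r : ℝ) := by positivity
  have hrm1 : (0 : ℝ) < (r : ℝ) - 1 := by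
    have : (2 : ℝ) ≤ (r : ℝ) := by exact_mod_cast hr
    linarith
  have hn0 : (0 : ℝ) ≤ (n : ℝ) := by positivity
  set S : ℝ := ∑ i, ((a i : ℝ)) ^ 2 with hS
  set B : ℝ := ∑ i, ((b i : ℝ)) ^ 2 with hB
  set E : ℝ := (#(partGraph p).edgeFinset : ℝ) with hE
  set F : ℝ := (#(partGraph q).edgeFinset : ℝ) with hF
  have h1 : 2 * E + S = (n : ℝ) ^ 2 := by
    rw [hE, hS]
    exact_mod_cast congrArg (Nat.cast : ℕ → ℝ) hEp
  have h2 : 2 * F + B = (n : ℝ) ^ 2 := by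
    rw [hF, hB]
    exact_mod_cast congrArg (Nat.cast : ℕ → ℝ) hEt
  -- Cauchy–Schwarz on the other r-1 parts
  have h3 : ((n : ℝ) - a i0) ^ 2 ≤ ((r : ℝ) - 1) * (S - (a i0 : ℝ) ^ 2) := by
    have hc := sq_sum_le_card_mul_sum_sq
      (s := (univ : Finset (Fin r)).erase i0) (f := fun i => ((a i : ℝ)))
    have hcard : (#((univ : Finset (Fin r)).erase i0) : ℝ) = (r : ℝ) - 1 := by
      rw [Finset.card_erase_of_mem (Finset.mem_univ _), Finset.card_univ, Fintype.card_fin]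
      have : 1 ≤ r := hr0
      push_cast [Nat.cast_sub this]
      ring
    have hsum1 : ∑ i ∈ (univ : Finset (Fin r)).erase i0, (a i : ℝ) = (n : ℝ) - a i0 := by
      have := Finset.sum_erase_add (univ : Finset (Fin r)) (fun i => ((a i : ℝ))) (Finset.mem_univ i0)
      have hcast : ∑ i, ((a i : ℝ)) = (n : ℝ) := by exact_mod_cast congrArg (Nat.cast : ℕ → ℝ) hasum
      linarith
    have hsum2 : ∑ i ∈ (univ : Finset (Fin r)).erase i0, ((a i : ℝ)) ^ 2 = S - (a i0 : ℝ) ^ 2 := by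
      have h : ∑ i ∈ (univ : Finset (Fin r)).erase i0, ((a i : ℝ)) ^ 2 + ((a i0 : ℝ)) ^ 2
          = ∑ i, ((a i : ℝ)) ^ 2 :=
        Finset.sum_erase_add (univ : Finset (Fin r)) (fun i => ((a i : ℝ)) ^ 2) (Finset.mem_univ i0)
      rw [hS]
      linarith
    rw [hcard, hsum1, hsum2] at hc
    exact hc
  -- smallness of part i0
  have hncard : ({v : Fin n | p v = i0}.ncard : ℝ) = (a i0 : ℝ) := by
    have hset : {v : Fin n | p v = i0} = ↑(univ.filter fun v => p v = i0) := by
      ext v; simp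
    rw [hset, Set.ncard_coe_finset, ha]
  have h4 : 2 * (r : ℝ) * (a i0 : ℝ) < n := by
    rw [hncard] at hi0
    have h2r : (0 : ℝ) < 2 * r := by positivity
    have := (lt_div_iff₀ h2r).mp hi0
    linarith
  have h5 : (0 : ℝ) ≤ (a i0 : ℝ) := by positivity
  -- bound on B
  set K : ℝ := ((n / r : ℕ) : ℝ) with hK
  have hKr : K * r ≤ (n : ℝ) := by
    rw [hK]
    exact_mod_cast congrArg (Nat.cast : ℕ → ℝ) (rfl : (n/r*r : ℕ) = _) ▸
      (by exact_mod_cast Nat.div_mul_le_self n r : ((n / r * r : ℕ) : ℝ) ≤ (n : ℝ))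
  have hK0 : (0 : ℝ) ≤ K := by rw [hK]; positivity
  have hBn : B ≤ (n : ℝ) * (K + 1) := by
    have hnat : ∑ i, (b i) ^ 2 ≤ n * (n / r + 1) := by
      calc ∑ i, (b i) ^ 2 ≤ ∑ i, b i * (n / r + 1) := by
            refine Finset.sum_le_sum fun i _ => ?_
            rw [sq]
            exact Nat.mul_le_mul_left _ (hbb i)
        _ = (∑ i, b i) * (n / r + 1) := by rw [← Finset.sum_mul]
        _ = n * (n / r + 1) := by rw [hbsum]
    rw [hB, hK]
    exact_mod_cast hnat
  -- key inequality
  have hu : (0 : ℝ) ≤ (n : ℝ) - 2 * r * (a i0 : ℝ) := by linarith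
  have key : (8 * (r : ℝ) + 1) * (n : ℝ) ^ 2 - 8 * (r : ℝ) ^ 2 * n ≤ 8 * (r : ℝ) ^ 2 * S := by
    have hmul : ((r : ℝ) - 1) * ((8 * (r : ℝ) + 1) * (n : ℝ) ^ 2 - 8 * (r : ℝ) ^ 2 * n)
        ≤ ((r : ℝ) - 1) * (8 * (r : ℝ) ^ 2 * S) := by
      have h3' := mul_le_mul_of_nonneg_left h3 (by positivity : (0 : ℝ) ≤ 8 * (r : ℝ) ^ 2)
      nlinarith [mul_nonneg (mul_nonneg hr0' hu) hn0,
        mul_nonneg hr0' (mul_nonneg hu hu),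
        mul_nonneg (mul_nonneg (mul_nonneg hr0' hr0') hrm1.le) hn0,
        mul_nonneg hr0' (sq_nonneg (n : ℝ))]
    exact le_of_mul_le_mul_left hmul hrm1
  -- bound r * B and 8 r^2 * B
  have h7 : (r : ℝ) * B ≤ ((n : ℝ) + r) * n := by
    nlinarith [mul_le_mul_of_nonneg_left hBn hr0', mul_le_mul_of_nonneg_right hKr hn0]
  have h8 : 8 * (r : ℝ) ^ 2 * B ≤ 8 * (r : ℝ) * (((n : ℝ) + r) * n) := by
    nlinarith [mul_le_mul_of_nonneg_left h7 (by positivity : (0 : ℝ) ≤ 8 * (r : ℝ))]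
  -- assemble
  set D : ℝ := (n : ℝ) ^ 2 / (16 * (r : ℝ) ^ 2) with hD
  have h16 : (0 : ℝ) < 16 * (r : ℝ) ^ 2 := by positivity
  have hDm : D * (16 * (r : ℝ) ^ 2) = (n : ℝ) ^ 2 := div_mul_cancel₀ _ (ne_of_gt h16)
  have h10 : 8 * (r : ℝ) ^ 2 * (B + 2 * D) ≤ 8 * (r : ℝ) ^ 2 * (S + 2 * n) := by
    nlinarith [key, h8, hDm]
  have h9 : B + 2 * D ≤ S + 2 * n :=
    le_of_mul_le_mul_left h10 (by positivity)
  rw [hcp, hct]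
  rw [← hE, ← hF]
  linarith
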